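/- Let the activation be h-smoothly approximately ReLU with h ≤ 1. Let V = (V_1,…,V_{L+1}) and W = (W_1,…,W_{L+1}) be weight tuples with ‖V − W‖ ≤ ‖V‖/(6L+10) and ‖V‖, ‖W‖ > √(L + 1/2). For j ∈ {0,…,L+1} define T(j) = (W_1,…,W_j, V_{j+1},…,V_{L+1}). Suppose that for every j ∈ {0,…,L}, every example s, and every convex combination W̃ of T(j) and T(j+1), one has J_s(W̃) ≤ 2·J_s(T(j)) ≤ 4·J_s(V). Then ‖∇_V J(V) − ∇_W J(W)‖ ≤ 256·(L+1)·√p·J(V)·‖V‖^{3L+5}·‖V − W‖ / h. -/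

import Mathlib

open scoped BigOperators
noncomputable section

abbrev Params (L p : ℕ) := EuclideanSpace ℝ ((Fin L × Fin p × Fin p) ⊕ Fin p)

def layerMat {L p : ℕ} (w : Params L p) (ℓ : Fin L) : Matrix (Fin p) (Fin p) ℝ :=
  Matrix.of fun i j => w (Sum.inl (ℓ, i, j))

def outVec {L p : ℕ} (w : Params L p) : Fin p → ℝ := fun j => w (Sum.inr j)

def SmoothApproxReLU (φ : ℝ → ℝ) (h : ℝ) : Prop :=
  Differentiable ℝ φ ∧ φ 0 = 0 ∧
    (∀ z₁ z₂ : ℝ, |deriv φ z₁ - deriv φ z₂| ≤ (1 / h) * |z₁ - z₂|) ∧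
    (∀ z : ℝ, |deriv φ z| ≤ 1) ∧ (∀ z : ℝ, |deriv φ z * z - φ z| ≤ h / 2)

def feat {L p : ℕ} (φ : ℝ → ℝ) (w : Params L p) (x : Fin p → ℝ) : ℕ → Fin p → ℝ
  | 0 => x
  | ℓ + 1 =>
    if hl : ℓ < L then fun i => φ ((layerMat w ⟨ℓ, hl⟩).mulVec (feat φ w x ℓ) i)
    else feat φ w x ℓ

def netOut {L p : ℕ} (φ : ℝ → ℝ) (w : Params L p) (x : Fin p → ℝ) : ℝ :=
  ∑ j, outVec w j * feat φ w x L j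

def lossS {L p : ℕ} (φ : ℝ → ℝ) (x : Fin p → ℝ) (y : ℝ) (w : Params L p) : ℝ :=
  Real.log (1 + Real.exp (-(y * netOut φ w x)))

def loss {L p n : ℕ} (φ : ℝ → ℝ) (x : Fin n → Fin p → ℝ) (y : Fin n → ℝ) (w : Params L p) : ℝ :=
  (1 / (n : ℝ)) * ∑ s, lossS φ (x s) (y s) w

def enorm' {p : ℕ} (v : Fin p → ℝ) : ℝ := Real.sqrt (∑ i, v i ^ 2)

def hmax (L p : ℕ) (J1 nV1 : ℝ) : ℝ :=
  min ((L : ℝ) ^ ((L : ℝ) / 2 - 3) * Real.log (1 / J1) / (24 * Real.sqrt p * nV1 ^ L)) 1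

def alphaMax (L p : ℕ) (J1 nV1 h : ℝ) : ℝ :=
  min (h / (1024 * ((L : ℝ) + 1) ^ 2 * p * J1 * nV1 ^ (3 * L + 5)))
    (((L : ℝ) + 1 / 2) * nV1 ^ 2 /
      (2 * L * ((L : ℝ) + 3 / 4) ^ 2 * J1 * Real.log (1 / J1) ^ ((2 : ℝ) / L)))

def Qtilde (L : ℕ) (J1 nV1 α : ℝ) : ℝ :=
  (L : ℝ) * ((L : ℝ) + 3 / 4) ^ 2 * α * J1 * Real.log (1 / J1) ^ ((2 : ℝ) / L) /
    (((L : ℝ) + 1 / 2) * nV1 ^ 2)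

def lipGrad {L p : ℕ} (J : Params L p → ℝ) (v : Params L p) : ℝ :=
  Filter.limsup (fun w : Params L p => ‖gradient J v - gradient J w‖ / ‖v - w‖)
    (nhdsWithin v {v}ᶜ)

/-- The interpolating weights `T(j) = (W_1, …, W_j, V_{j+1}, …, V_{L+1})`: the first `j`
layers (paper indexing) are taken from `W` and the rest from `V`. -/
def mixParams {L p : ℕ} (V W : Params L p) (j : ℕ) : Params L p :=
  WithLp.toLp 2 fun i =>
    match i with
    | Sum.inl q => if (q.1 : ℕ) < j then W (Sum.inl q) else V (Sum.inl q)
    | Sum.inr a => if L < j then W (Sum.inr a) else V (Sum.inr a)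
section EnormLemmas

variable {p : ℕ}

lemma enorm'_eq_norm (v : Fin p → ℝ) :
    enorm' v = ‖(WithLp.equiv 2 (Fin p → ℝ)).symm v‖ := by
  rw [enorm', EuclideanSpace.norm_eq]
  congr 1
  refine Finset.sum_congr rfl fun i _ => ?_
  rw [Real.norm_eq_abs, sq_abs]; rfl

lemma enorm'_nonneg (v : Fin p → ℝ) : 0 ≤ enorm' v := Real.sqrt_nonneg _

lemma enorm'_add_le (a b : Fin p → ℝ) :
    enorm' (fun i => a i + b i) ≤ enorm' a + enorm' b := by
  rw [enorm'_eq_norm, enorm'_eq_norm, enorm'_eq_norm]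
  exact norm_add_le ((WithLp.equiv 2 (Fin p → ℝ)).symm a) ((WithLp.equiv 2 (Fin p → ℝ)).symm b)

lemma abs_le_enorm (v : Fin p → ℝ) (i : Fin p) : |v i| ≤ enorm' v := by
  rw [enorm', ← Real.sqrt_sq_eq_abs]
  exact Real.sqrt_le_sqrt (Finset.single_le_sum (fun j _ => sq_nonneg (v j)) (Finset.mem_univ i))

lemma enorm'_mono {a b : Fin p → ℝ} (hab : ∀ i, |a i| ≤ |b i|) : enorm' a ≤ enorm' b := by
  refine Real.sqrt_le_sqrt (Finset.sum_le_sum fun i _ => ?_)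
  rw [← sq_abs (a i), ← sq_abs (b i)]
  exact pow_le_pow_left₀ (abs_nonneg _) (hab i) 2

lemma enorm'_mono_mul {a b : Fin p → ℝ} {c : ℝ} (hc : 0 ≤ c) (hab : ∀ i, |a i| ≤ c * |b i|) :
    enorm' a ≤ c * enorm' b := by
  have h1 : enorm' a ≤ enorm' (fun i => c * b i) := by
    refine enorm'_mono fun i => ?_
    rw [abs_mul, abs_of_nonneg hc]; exact hab i
  refine h1.trans (le_of_eq ?_)
  rw [enorm', enorm']
  rw [← Real.sqrt_sq hc, ← Real.sqrt_mul (sq_nonneg c), Finset.mul_sum]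
  congr 1
  refine Finset.sum_congr rfl fun i _ => ?_
  rw [mul_pow, Real.sq_sqrt (sq_nonneg c)]

lemma enorm'_cauchy (a b : Fin p → ℝ) : |∑ i, a i * b i| ≤ enorm' a * enorm' b := by
  have h := Finset.sum_mul_sq_le_sq_mul_sq Finset.univ a b
  have h2 : |∑ i, a i * b i| = Real.sqrt ((∑ i, a i * b i) ^ 2) := (Real.sqrt_sq_eq_abs _).symm
  rw [h2, enorm', enorm', ← Real.sqrt_mul (Finset.sum_nonneg fun i _ => sq_nonneg (a i))]
  exact Real.sqrt_le_sqrt h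

/-- Frobenius-type norm of a matrix. -/
def matFro (M : Matrix (Fin p) (Fin p) ℝ) : ℝ := Real.sqrt (∑ i, ∑ j, M i j ^ 2)

lemma matFro_nonneg (M : Matrix (Fin p) (Fin p) ℝ) : 0 ≤ matFro M := Real.sqrt_nonneg _

lemma enorm'_mulVec_le (M : Matrix (Fin p) (Fin p) ℝ) (v : Fin p → ℝ) :
    enorm' (M.mulVec v) ≤ matFro M * enorm' v := by
  have hrow : ∀ i : Fin p, (M.mulVec v i) ^ 2 ≤ (∑ j, M i j ^ 2) * ∑ j, v j ^ 2 := by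
    intro i
    have := Finset.sum_mul_sq_le_sq_mul_sq Finset.univ (M i) v
    simpa [Matrix.mulVec, dotProduct] using this
  have hsum : ∑ i, (M.mulVec v i) ^ 2 ≤ (∑ i, ∑ j, M i j ^ 2) * ∑ j, v j ^ 2 := by
    rw [Finset.sum_mul]
    exact Finset.sum_le_sum fun i _ => hrow i
  rw [enorm', matFro, enorm']
  exact (Real.sqrt_le_sqrt hsum).trans_eq (Real.sqrt_mul (Finset.sum_nonneg fun i _ =>
    Finset.sum_nonneg fun j _ => sq_nonneg _) _)

end EnormLemmas

section ParamsLemmas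

variable {L p : ℕ}

lemma params_norm_eq (w : Params L p) :
    ‖w‖ = Real.sqrt (∑ k : (Fin L × Fin p × Fin p) ⊕ Fin p, (w k) ^ 2) := by
  rw [EuclideanSpace.norm_eq]
  congr 1
  exact Finset.sum_congr rfl fun k _ => by rw [Real.norm_eq_abs, sq_abs]

lemma matFro_layerMat_le (w : Params L p) (ℓ : Fin L) : matFro (layerMat w ℓ) ≤ ‖w‖ := by
  rw [matFro, params_norm_eq]
  refine Real.sqrt_le_sqrt ?_
  rw [Fintype.sum_sum_type]
  have h1 : (∑ q : Fin L × Fin p × Fin p, (w (Sum.inl q)) ^ 2)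
      = ∑ l : Fin L, ∑ i : Fin p, ∑ j : Fin p, (w (Sum.inl (l, i, j))) ^ 2 := by
    rw [Fintype.sum_prod_type]
    exact Finset.sum_congr rfl fun l _ => by rw [Fintype.sum_prod_type]
  have h2 : ∑ i, ∑ j, (layerMat w ℓ) i j ^ 2
      ≤ ∑ l : Fin L, ∑ i : Fin p, ∑ j : Fin p, (w (Sum.inl (l, i, j))) ^ 2 := by
    have := Finset.single_le_sum (f := fun l : Fin L =>
      ∑ i : Fin p, ∑ j : Fin p, (w (Sum.inl (l, i, j))) ^ 2)
      (fun l _ => Finset.sum_nonneg fun i _ => Finset.sum_nonneg fun j _ => sq_nonneg _)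
      (Finset.mem_univ ℓ)
    simpa [layerMat] using this
  refine h2.trans ?_
  rw [← h1]
  exact le_add_of_nonneg_right (Finset.sum_nonneg fun a _ => sq_nonneg _)

lemma enorm'_outVec_le (w : Params L p) : enorm' (outVec w) ≤ ‖w‖ := by
  rw [enorm', params_norm_eq]
  refine Real.sqrt_le_sqrt ?_
  rw [Fintype.sum_sum_type]
  have : ∑ i, outVec w i ^ 2 = ∑ a : Fin p, (w (Sum.inr a)) ^ 2 := by simp [outVec]
  rw [this]
  exact le_add_of_nonneg_left (Finset.sum_nonneg fun q _ => sq_nonneg _)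

lemma layerMat_sub (v w : Params L p) (ℓ : Fin L) :
    layerMat (v - w) ℓ = layerMat v ℓ - layerMat w ℓ := by
  ext i j
  simp [layerMat, Matrix.sub_apply]

lemma outVec_sub (v w : Params L p) (j : Fin p) :
    outVec (v - w) j = outVec v j - outVec w j := by simp [outVec]

end ParamsLemmas
section ScalarLemmas

lemma phi_lip {φ : ℝ → ℝ} {h : ℝ} (hφ : SmoothApproxReLU φ h) (a b : ℝ) :
    |φ a - φ b| ≤ |a - b| := by
  have := Convex.norm_image_sub_le_of_norm_deriv_le (𝕜 := ℝ) (f := φ) (C := 1)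
    (fun z _ => hφ.1 z) (fun z _ => by
      simpa [Real.norm_eq_abs] using hφ.2.2.2.1 z) convex_univ (Set.mem_univ b) (Set.mem_univ a)
  simpa [Real.norm_eq_abs] using this

lemma phi_abs_le {φ : ℝ → ℝ} {h : ℝ} (hφ : SmoothApproxReLU φ h) (z : ℝ) : |φ z| ≤ |z| := by
  have := phi_lip hφ z 0
  simpa [hφ.2.1] using this

/-- The logistic sigmoid. -/
def sig (t : ℝ) : ℝ := Real.exp t / (1 + Real.exp t)

/-- The softplus function. -/
def Gf (t : ℝ) : ℝ := Real.log (1 + Real.exp t)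

lemma one_add_exp_pos (t : ℝ) : (0 : ℝ) < 1 + Real.exp t := by positivity

lemma sig_nonneg (t : ℝ) : 0 ≤ sig t :=
  div_nonneg (Real.exp_nonneg t) (one_add_exp_pos t).le

lemma sig_le_one (t : ℝ) : sig t ≤ 1 := by
  rw [sig, div_le_one (one_add_exp_pos t)]; linarith

lemma Gf_nonneg (t : ℝ) : 0 ≤ Gf t :=
  Real.log_nonneg (by linarith [Real.exp_nonneg t])

lemma hasDerivAt_Gf (t : ℝ) : HasDerivAt Gf (sig t) t := by
  have h1 : HasDerivAt (fun t : ℝ => 1 + Real.exp t) (Real.exp t) t :=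
    (Real.hasDerivAt_exp t).const_add 1
  exact h1.log (one_add_exp_pos t).ne'

lemma sig_le_Gf (t : ℝ) : sig t ≤ Gf t := by
  have h1 : Real.log (1 + Real.exp t)⁻¹ ≤ (1 + Real.exp t)⁻¹ - 1 :=
    Real.log_le_sub_one_of_pos (by positivity)
  rw [Real.log_inv] at h1
  have h2 : sig t = 1 - (1 + Real.exp t)⁻¹ := by
    rw [sig, eq_sub_iff_add_eq, div_add' _ _ _ (one_add_exp_pos t).ne',
      div_eq_one_iff_eq (one_add_exp_pos t).ne']
    field_simp
    ring
  rw [Gf, h2]; linarith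

lemma sig_eq_one_sub (t : ℝ) : sig t = 1 - (1 + Real.exp t)⁻¹ := by
  rw [sig, eq_sub_iff_add_eq, div_add' _ _ _ (one_add_exp_pos t).ne',
    div_eq_one_iff_eq (one_add_exp_pos t).ne']
  field_simp
  ring

lemma sig_monotone : Monotone sig := by
  intro a b hab
  rw [sig_eq_one_sub, sig_eq_one_sub]
  have : (1 + Real.exp b)⁻¹ ≤ (1 + Real.exp a)⁻¹ :=
    inv_anti₀ (one_add_exp_pos a) (by linarith [Real.exp_le_exp.2 hab])
  linarith

lemma hasDerivAt_sig (t : ℝ) : HasDerivAt sig (sig t * (1 - sig t)) t := by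
  have h1 : HasDerivAt (fun t : ℝ => 1 + Real.exp t) (Real.exp t) t :=
    (Real.hasDerivAt_exp t).const_add 1
  have h2 := (Real.hasDerivAt_exp t).div h1 (one_add_exp_pos t).ne'
  have h3 : (Real.exp t * (1 + Real.exp t) - Real.exp t * Real.exp t) / (1 + Real.exp t) ^ 2
      = sig t * (1 - sig t) := by
    rw [sig]
    field_simp
  rw [← h3]; exact h2

lemma sig_sub_le (a b : ℝ) : |sig a - sig b| ≤ max (sig a) (sig b) * |a - b| := by
  rcases le_total a b with hab | hab
  · have hmax : max (sig a) (sig b) = sig b := max_eq_right (sig_monotone hab)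
    rw [hmax]
    have := Convex.norm_image_sub_le_of_norm_deriv_le (𝕜 := ℝ) (f := sig) (C := sig b)
      (s := Set.Icc a b) (fun z _ => (hasDerivAt_sig z).differentiableAt)
      (fun z hz => by
        have h1 : deriv sig z = sig z * (1 - sig z) := (hasDerivAt_sig z).deriv
        rw [Real.norm_eq_abs, h1, abs_of_nonneg (mul_nonneg (sig_nonneg z)
          (by linarith [sig_le_one z]))]
        calc sig z * (1 - sig z) ≤ sig z * 1 := by
              refine mul_le_mul_of_nonneg_left (by linarith [sig_nonneg z]) (sig_nonneg z)
          _ ≤ sig b := by rw [mul_one]; exact sig_monotone hz.2)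
      (convex_Icc a b) (Set.right_mem_Icc.2 hab) (Set.left_mem_Icc.2 hab)
    simpa [Real.norm_eq_abs] using this
  · have hmax : max (sig a) (sig b) = sig a := max_eq_left (sig_monotone hab)
    rw [hmax]
    have := Convex.norm_image_sub_le_of_norm_deriv_le (𝕜 := ℝ) (f := sig) (C := sig a)
      (s := Set.Icc b a) (fun z _ => (hasDerivAt_sig z).differentiableAt)
      (fun z hz => by
        have h1 : deriv sig z = sig z * (1 - sig z) := (hasDerivAt_sig z).deriv
        rw [Real.norm_eq_abs, h1, abs_of_nonneg (mul_nonneg (sig_nonneg z)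
          (by linarith [sig_le_one z]))]
        calc sig z * (1 - sig z) ≤ sig z * 1 := by
              refine mul_le_mul_of_nonneg_left (by linarith [sig_nonneg z]) (sig_nonneg z)
          _ ≤ sig a := by rw [mul_one]; exact sig_monotone hz.2)
      (convex_Icc b a) (Set.left_mem_Icc.2 hab) (Set.right_mem_Icc.2 hab)
    simpa [Real.norm_eq_abs] using this

lemma lossS_eq_Gf {L p : ℕ} (φ : ℝ → ℝ) (x : Fin p → ℝ) (y : ℝ) (w : Params L p) :
    lossS φ x y w = Gf (-(y * netOut φ w x)) := rfl

end ScalarLemmas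
section DfeatDef

variable {L p : ℕ}

/-- Directional derivative of `feat` with respect to the weights, in direction `u`. -/
def dfeat (φ : ℝ → ℝ) (w u : Params L p) (x : Fin p → ℝ) : ℕ → Fin p → ℝ
  | 0 => fun _ => 0
  | ℓ + 1 =>
    if hl : ℓ < L then
      fun i => deriv φ ((layerMat w ⟨ℓ, hl⟩).mulVec (feat φ w x ℓ) i) *
        ((layerMat u ⟨ℓ, hl⟩).mulVec (feat φ w x ℓ) i +
          (layerMat w ⟨ℓ, hl⟩).mulVec (dfeat φ w u x ℓ) i)
    else dfeat φ w u x ℓ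

lemma feat_zero (φ : ℝ → ℝ) (w : Params L p) (x : Fin p → ℝ) : feat φ w x 0 = x := rfl

lemma feat_succ (φ : ℝ → ℝ) (w : Params L p) (x : Fin p → ℝ) {ℓ : ℕ} (hl : ℓ < L) :
    feat φ w x (ℓ + 1) = fun i => φ ((layerMat w ⟨ℓ, hl⟩).mulVec (feat φ w x ℓ) i) := by
  rw [feat, dif_pos hl]

lemma feat_succ_of_ge (φ : ℝ → ℝ) (w : Params L p) (x : Fin p → ℝ) {ℓ : ℕ} (hl : ¬ ℓ < L) :
    feat φ w x (ℓ + 1) = feat φ w x ℓ := by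
  rw [feat, dif_neg hl]

lemma dfeat_zero (φ : ℝ → ℝ) (w u : Params L p) (x : Fin p → ℝ) :
    dfeat φ w u x 0 = fun _ => 0 := rfl

lemma dfeat_succ (φ : ℝ → ℝ) (w u : Params L p) (x : Fin p → ℝ) {ℓ : ℕ} (hl : ℓ < L) :
    dfeat φ w u x (ℓ + 1) = fun i =>
      deriv φ ((layerMat w ⟨ℓ, hl⟩).mulVec (feat φ w x ℓ) i) *
        ((layerMat u ⟨ℓ, hl⟩).mulVec (feat φ w x ℓ) i +
          (layerMat w ⟨ℓ, hl⟩).mulVec (dfeat φ w u x ℓ) i) := by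
  rw [dfeat, dif_pos hl]

lemma dfeat_succ_of_ge (φ : ℝ → ℝ) (w u : Params L p) (x : Fin p → ℝ) {ℓ : ℕ} (hl : ¬ ℓ < L) :
    dfeat φ w u x (ℓ + 1) = dfeat φ w u x ℓ := by
  rw [dfeat, dif_neg hl]

lemma params_add_apply (u v : Params L p) (k : (Fin L × Fin p × Fin p) ⊕ Fin p) :
    (u + v) k = u k + v k := rfl

lemma params_smul_apply (c : ℝ) (u : Params L p) (k : (Fin L × Fin p × Fin p) ⊕ Fin p) :
    (c • u) k = c * u k := rfl

lemma params_sub_apply (u v : Params L p) (k : (Fin L × Fin p × Fin p) ⊕ Fin p) :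
    (u - v) k = u k - v k := rfl

lemma layerMat_add (u v : Params L p) (ℓ : Fin L) :
    layerMat (u + v) ℓ = layerMat u ℓ + layerMat v ℓ := by
  ext i j; simp [layerMat, params_add_apply, Matrix.add_apply]

lemma layerMat_smul (c : ℝ) (u : Params L p) (ℓ : Fin L) :
    layerMat (c • u) ℓ = c • layerMat u ℓ := by
  ext i j; simp [layerMat, params_smul_apply, Matrix.smul_apply]

lemma dfeat_add (φ : ℝ → ℝ) (w u v : Params L p) (x : Fin p → ℝ) (ℓ : ℕ) :
    dfeat φ w (u + v) x ℓ = fun i => dfeat φ w u x ℓ i + dfeat φ w v x ℓ i := by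
  induction ℓ with
  | zero => funext i; simp [dfeat_zero]
  | succ ℓ ih =>
    by_cases hl : ℓ < L
    · funext i
      rw [dfeat_succ φ w (u + v) x hl, dfeat_succ φ w u x hl, dfeat_succ φ w v x hl]
      simp only [layerMat_add, Matrix.add_mulVec, ih]
      have : (layerMat w ⟨ℓ, hl⟩).mulVec
          (fun i => dfeat φ w u x ℓ i + dfeat φ w v x ℓ i) i =
          (layerMat w ⟨ℓ, hl⟩).mulVec (dfeat φ w u x ℓ) i +
          (layerMat w ⟨ℓ, hl⟩).mulVec (dfeat φ w v x ℓ) i := by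
        simp [Matrix.mulVec, dotProduct, ← Finset.sum_add_distrib]
        exact Finset.sum_congr rfl fun j _ => by ring
      rw [this]
      simp only [Pi.add_apply]
      ring
    · rw [dfeat_succ_of_ge φ w (u + v) x hl, dfeat_succ_of_ge φ w u x hl,
        dfeat_succ_of_ge φ w v x hl, ih]

lemma dfeat_smul (φ : ℝ → ℝ) (w : Params L p) (c : ℝ) (u : Params L p) (x : Fin p → ℝ) (ℓ : ℕ) :
    dfeat φ w (c • u) x ℓ = fun i => c * dfeat φ w u x ℓ i := by
  induction ℓ with
  | zero => funext i; simp [dfeat_zero]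
  | succ ℓ ih =>
    by_cases hl : ℓ < L
    · funext i
      rw [dfeat_succ φ w (c • u) x hl, dfeat_succ φ w u x hl]
      simp only [layerMat_smul, Matrix.smul_mulVec, ih]
      have : (layerMat w ⟨ℓ, hl⟩).mulVec (fun i => c * dfeat φ w u x ℓ i) i =
          c * (layerMat w ⟨ℓ, hl⟩).mulVec (dfeat φ w u x ℓ) i := by
        simp [Matrix.mulVec, dotProduct, Finset.mul_sum]
        exact Finset.sum_congr rfl fun j _ => by ring
      rw [this]
      simp only [Pi.smul_apply, smul_eq_mul]
      ring
    · rw [dfeat_succ_of_ge φ w (c • u) x hl, dfeat_succ_of_ge φ w u x hl, ih]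

/-- `dfeat` as a continuous linear map in the direction. -/
def dfeatL (φ : ℝ → ℝ) (w : Params L p) (x : Fin p → ℝ) (ℓ : ℕ) :
    Params L p →L[ℝ] (Fin p → ℝ) :=
  LinearMap.toContinuousLinearMap
    { toFun := fun u => dfeat φ w u x ℓ
      map_add' := fun u v => by
        show dfeat φ w (u + v) x ℓ = _
        rw [dfeat_add φ w u v x ℓ]
        rfl
      map_smul' := fun c u => by
        show dfeat φ w (c • u) x ℓ = _
        rw [dfeat_smul φ w c u x ℓ]
        rfl }

@[simp] lemma dfeatL_apply (φ : ℝ → ℝ) (w : Params L p) (x : Fin p → ℝ) (ℓ : ℕ)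
    (u : Params L p) : dfeatL φ w x ℓ u = dfeat φ w u x ℓ := rfl

lemma mulVec_layerMat_apply (w : Params L p) (ℓ : Fin L) (g : Fin p → ℝ) (i : Fin p) :
    (layerMat w ℓ).mulVec g i = ∑ j, w (Sum.inl (ℓ, i, j)) * g j := by
  simp [layerMat, Matrix.mulVec, dotProduct]

end DfeatDef
section DfeatDeriv

variable {L p : ℕ}

theorem hasFDerivAt_feat (φ : ℝ → ℝ) (hd : Differentiable ℝ φ) (x : Fin p → ℝ)
    (w : Params L p) : ∀ ℓ, HasFDerivAt (fun v => feat φ v x ℓ) (dfeatL φ w x ℓ) w := by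
  intro ℓ
  induction ℓ with
  | zero =>
    have h0 : dfeatL φ w x 0 = 0 := by
      ext u i
      simp [dfeatL_apply, dfeat_zero]
    rw [h0]
    exact hasFDerivAt_const x w
  | succ ℓ ih =>
    by_cases hl : ℓ < L
    · have key : (fun v : Params L p => feat φ v x (ℓ + 1)) =
          fun v => (fun i => φ ((layerMat v ⟨ℓ, hl⟩).mulVec (feat φ v x ℓ) i)) := by
        funext v
        rw [feat_succ φ v x hl]
      rw [key]
      refine hasFDerivAt_pi'' fun i => ?_
      -- the coordinate function
      have hsum : HasFDerivAt
          (fun v : Params L p => ∑ j, v (Sum.inl (⟨ℓ, hl⟩, i, j)) * feat φ v x ℓ j)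
          (∑ j, (w (Sum.inl (⟨ℓ, hl⟩, i, j)) •
              ((ContinuousLinearMap.proj j).comp (dfeatL φ w x ℓ)) +
            feat φ w x ℓ j •
              (EuclideanSpace.proj (Sum.inl (⟨ℓ, hl⟩, i, j)) : Params L p →L[ℝ] ℝ))) w := by
        refine HasFDerivAt.fun_sum fun j _ => ?_
        have hc : HasFDerivAt (fun v : Params L p => v (Sum.inl (⟨ℓ, hl⟩, i, j)))
            (EuclideanSpace.proj (Sum.inl (⟨ℓ, hl⟩, i, j)) : Params L p →L[ℝ] ℝ) w := by
          have : (fun v : Params L p => v (Sum.inl (⟨ℓ, hl⟩, i, j))) =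
              ⇑(EuclideanSpace.proj (Sum.inl (⟨ℓ, hl⟩, i, j)) : Params L p →L[ℝ] ℝ) := rfl
          rw [this]
          exact ContinuousLinearMap.hasFDerivAt _
        have hf : HasFDerivAt (fun v => feat φ v x ℓ j)
            ((ContinuousLinearMap.proj j).comp (dfeatL φ w x ℓ)) w :=
          hasFDerivAt_pi'.1 ih j
        exact hc.mul hf
      have hz : ((layerMat w ⟨ℓ, hl⟩).mulVec (feat φ w x ℓ) i) =
          ∑ j, w (Sum.inl ((⟨ℓ, hl⟩ : Fin L), i, j)) * feat φ w x ℓ j :=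
        mulVec_layerMat_apply w ⟨ℓ, hl⟩ (feat φ w x ℓ) i
      have hder : HasDerivAt φ (deriv φ ((layerMat w ⟨ℓ, hl⟩).mulVec (feat φ w x ℓ) i))
          (∑ j, w (Sum.inl ((⟨ℓ, hl⟩ : Fin L), i, j)) * feat φ w x ℓ j) := by
        rw [← hz]
        exact (hd _).hasDerivAt
      have hφi := hder.comp_hasFDerivAt w hsum
      · have heq : (ContinuousLinearMap.proj i).comp (dfeatL φ w x (ℓ + 1)) =
            deriv φ ((layerMat w ⟨ℓ, hl⟩).mulVec (feat φ w x ℓ) i) •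
              (∑ j, (w (Sum.inl (⟨ℓ, hl⟩, i, j)) •
                  ((ContinuousLinearMap.proj j).comp (dfeatL φ w x ℓ)) +
                feat φ w x ℓ j •
                  (EuclideanSpace.proj (Sum.inl (⟨ℓ, hl⟩, i, j)) : Params L p →L[ℝ] ℝ))) := by
          ext u
          simp only [ContinuousLinearMap.coe_comp', Function.comp_apply, dfeatL_apply,
            ContinuousLinearMap.proj_apply, ContinuousLinearMap.coe_smul', Pi.smul_apply,
            ContinuousLinearMap.coe_sum', Finset.sum_apply, ContinuousLinearMap.add_apply,
            smul_eq_mul]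
          rw [dfeat_succ φ w u x hl]
          beta_reduce
          simp only [mulVec_layerMat_apply]
          congr 1
          rw [← Finset.sum_add_distrib]
          refine Finset.sum_congr rfl fun j _ => ?_
          have : (EuclideanSpace.proj (Sum.inl ((⟨ℓ, hl⟩ : Fin L), i, j)) :
              Params L p →L[ℝ] ℝ) u = u (Sum.inl (⟨ℓ, hl⟩, i, j)) := rfl
          rw [this]
          ring
        rw [heq]
        have hfn : (fun v : Params L p => φ ((layerMat v ⟨ℓ, hl⟩).mulVec (feat φ v x ℓ) i)) =
            fun v => φ (∑ j, v (Sum.inl (⟨ℓ, hl⟩, i, j)) * feat φ v x ℓ j) := by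
          funext v
          rw [mulVec_layerMat_apply]
        rw [hfn]
        exact hφi
    · have key : (fun v : Params L p => feat φ v x (ℓ + 1)) = fun v => feat φ v x ℓ := by
        funext v
        rw [feat_succ_of_ge φ v x hl]
      have key2 : dfeatL φ w x (ℓ + 1) = dfeatL φ w x ℓ := by
        ext u
        simp only [dfeatL_apply]
        rw [dfeat_succ_of_ge φ w u x hl]
      rw [key, key2]
      exact ih

end DfeatDeriv
section Bounds

variable {L p : ℕ}

lemma mulVec_sub_decomp (M M' : Matrix (Fin p) (Fin p) ℝ) (f f' : Fin p → ℝ) (i : Fin p) :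
    M.mulVec f i - M'.mulVec f' i = (M - M').mulVec f i + M'.mulVec (fun j => f j - f' j) i := by
  simp only [Matrix.mulVec, dotProduct, Matrix.sub_apply, ← Finset.sum_add_distrib,
    ← Finset.sum_sub_distrib]
  exact Finset.sum_congr rfl fun j _ => by ring

lemma matFro_layer_sub_le (w w' : Params L p) (ℓ : Fin L) :
    matFro (layerMat w ℓ - layerMat w' ℓ) ≤ ‖w - w'‖ := by
  rw [← layerMat_sub]
  exact matFro_layerMat_le _ _

lemma feat_bound {φ : ℝ → ℝ} {h : ℝ} (hφ : SmoothApproxReLU φ h) {x : Fin p → ℝ}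
    (hx : enorm' x = 1) {b : ℝ} (hb : 1 ≤ b) {w : Params L p} (hw : ‖w‖ ≤ b) :
    ∀ ℓ, enorm' (feat φ w x ℓ) ≤ b ^ ℓ := by
  intro ℓ
  induction ℓ with
  | zero => rw [feat_zero, hx, pow_zero]
  | succ ℓ ih =>
    by_cases hl : ℓ < L
    · rw [feat_succ φ w x hl]
      calc enorm' (fun i => φ ((layerMat w ⟨ℓ, hl⟩).mulVec (feat φ w x ℓ) i))
          ≤ enorm' ((layerMat w ⟨ℓ, hl⟩).mulVec (feat φ w x ℓ)) :=
            enorm'_mono fun i => phi_abs_le hφ _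
        _ ≤ matFro (layerMat w ⟨ℓ, hl⟩) * enorm' (feat φ w x ℓ) := enorm'_mulVec_le _ _
        _ ≤ b * b ^ ℓ := mul_le_mul ((matFro_layerMat_le w _).trans hw) ih (enorm'_nonneg _)
            (zero_le_one.trans hb)
        _ = b ^ (ℓ + 1) := by ring
    · rw [feat_succ_of_ge φ w x hl]
      exact ih.trans (pow_le_pow_right₀ hb (Nat.le_succ ℓ))

lemma feat_lip {φ : ℝ → ℝ} {h : ℝ} (hφ : SmoothApproxReLU φ h) {x : Fin p → ℝ}
    (hx : enorm' x = 1) {b : ℝ} (hb : 1 ≤ b) {w w' : Params L p} (hw : ‖w‖ ≤ b)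
    (hw' : ‖w'‖ ≤ b) :
    ∀ ℓ, enorm' (fun i => feat φ w x ℓ i - feat φ w' x ℓ i) ≤ (ℓ : ℝ) * b ^ ℓ * ‖w - w'‖ := by
  intro ℓ
  induction ℓ with
  | zero => simp [feat_zero, enorm']
  | succ ℓ ih =>
    by_cases hl : ℓ < L
    · have hstep : enorm' (fun i => feat φ w x (ℓ + 1) i - feat φ w' x (ℓ + 1) i)
          ≤ ‖w - w'‖ * b ^ ℓ + b * ((ℓ : ℝ) * b ^ ℓ * ‖w - w'‖) := by
        have h1 : enorm' (fun i => feat φ w x (ℓ + 1) i - feat φ w' x (ℓ + 1) i)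
            ≤ enorm' (fun i => (layerMat w ⟨ℓ, hl⟩).mulVec (feat φ w x ℓ) i -
                (layerMat w' ⟨ℓ, hl⟩).mulVec (feat φ w' x ℓ) i) := by
          refine enorm'_mono fun i => ?_
          rw [feat_succ φ w x hl, feat_succ φ w' x hl]
          exact phi_lip hφ _ _
        have h2 : (fun i => (layerMat w ⟨ℓ, hl⟩).mulVec (feat φ w x ℓ) i -
              (layerMat w' ⟨ℓ, hl⟩).mulVec (feat φ w' x ℓ) i) =
            fun i => (layerMat w ⟨ℓ, hl⟩ - layerMat w' ⟨ℓ, hl⟩).mulVec (feat φ w x ℓ) i +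
              (layerMat w' ⟨ℓ, hl⟩).mulVec
                (fun j => feat φ w x ℓ j - feat φ w' x ℓ j) i :=
          funext fun i => mulVec_sub_decomp _ _ _ _ i
        refine h1.trans ?_
        rw [h2]
        refine (enorm'_add_le _ _).trans ?_
        refine add_le_add ((enorm'_mulVec_le _ _).trans ?_) ((enorm'_mulVec_le _ _).trans ?_)
        · exact mul_le_mul (matFro_layer_sub_le w w' _) (feat_bound hφ hx hb hw ℓ)
            (enorm'_nonneg _) (norm_nonneg _)
        · exact mul_le_mul ((matFro_layerMat_le w' _).trans hw') ih (enorm'_nonneg _)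
            (zero_le_one.trans hb)
      refine hstep.trans ?_
      have hP : (1 : ℝ) ≤ b ^ ℓ := one_le_pow₀ hb
      push_cast
      have hPnn : (0 : ℝ) ≤ b ^ ℓ := by positivity
      have hD : (0 : ℝ) ≤ ‖w - w'‖ := norm_nonneg _
      have hkey : 0 ≤ b ^ ℓ * ‖w - w'‖ * (b - 1) := by
        have : (0:ℝ) ≤ b - 1 := by linarith
        positivity
      rw [pow_succ]
      nlinarith [hkey]
    · rw [feat_succ_of_ge φ w x hl, feat_succ_of_ge φ w' x hl]
      refine ih.trans ?_
      have h1 : (ℓ : ℝ) * b ^ ℓ ≤ ((ℓ : ℝ) + 1) * b ^ (ℓ + 1) := by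
        have hP : (0:ℝ) ≤ b ^ ℓ := by positivity
        have h2 : b ^ ℓ ≤ b ^ (ℓ + 1) := pow_le_pow_right₀ hb (Nat.le_succ ℓ)
        have h3 : (0:ℝ) ≤ (ℓ:ℝ) := Nat.cast_nonneg ℓ
        nlinarith
      push_cast
      exact mul_le_mul_of_nonneg_right h1 (norm_nonneg _)

lemma dfeat_bound {φ : ℝ → ℝ} {h : ℝ} (hφ : SmoothApproxReLU φ h) {x : Fin p → ℝ}
    (hx : enorm' x = 1) {b : ℝ} (hb : 1 ≤ b) {w : Params L p} (hw : ‖w‖ ≤ b) (u : Params L p) :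
    ∀ ℓ, enorm' (dfeat φ w u x ℓ) ≤ (ℓ : ℝ) * b ^ ℓ * ‖u‖ := by
  intro ℓ
  induction ℓ with
  | zero => simp [dfeat_zero, enorm']
  | succ ℓ ih =>
    by_cases hl : ℓ < L
    · have hstep : enorm' (dfeat φ w u x (ℓ + 1))
          ≤ ‖u‖ * b ^ ℓ + b * ((ℓ : ℝ) * b ^ ℓ * ‖u‖) := by
        have h1 : enorm' (dfeat φ w u x (ℓ + 1))
            ≤ enorm' (fun i => (layerMat u ⟨ℓ, hl⟩).mulVec (feat φ w x ℓ) i +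
                (layerMat w ⟨ℓ, hl⟩).mulVec (dfeat φ w u x ℓ) i) := by
          refine enorm'_mono fun i => ?_
          rw [dfeat_succ φ w u x hl]
          beta_reduce
          rw [abs_mul]
          calc |deriv φ ((layerMat w ⟨ℓ, hl⟩).mulVec (feat φ w x ℓ) i)| *
                |(layerMat u ⟨ℓ, hl⟩).mulVec (feat φ w x ℓ) i +
                  (layerMat w ⟨ℓ, hl⟩).mulVec (dfeat φ w u x ℓ) i|
              ≤ 1 * |(layerMat u ⟨ℓ, hl⟩).mulVec (feat φ w x ℓ) i +
                  (layerMat w ⟨ℓ, hl⟩).mulVec (dfeat φ w u x ℓ) i| :=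
              mul_le_mul_of_nonneg_right (hφ.2.2.2.1 _) (abs_nonneg _)
            _ = _ := one_mul _
        refine h1.trans ?_
        refine (enorm'_add_le _ _).trans ?_
        refine add_le_add ((enorm'_mulVec_le _ _).trans ?_) ((enorm'_mulVec_le _ _).trans ?_)
        · exact mul_le_mul (matFro_layerMat_le u _) (feat_bound hφ hx hb hw ℓ)
            (enorm'_nonneg _) (norm_nonneg _)
        · exact mul_le_mul ((matFro_layerMat_le w _).trans hw) ih (enorm'_nonneg _)
            (zero_le_one.trans hb)
      refine hstep.trans ?_
      push_cast
      have hPnn : (0 : ℝ) ≤ b ^ ℓ := by positivity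
      have hkey : 0 ≤ b ^ ℓ * ‖u‖ * (b - 1) := by
        have : (0:ℝ) ≤ b - 1 := by linarith
        positivity
      rw [pow_succ]
      nlinarith [hkey]
    · rw [dfeat_succ_of_ge φ w u x hl]
      refine ih.trans ?_
      have h1 : (ℓ : ℝ) * b ^ ℓ ≤ ((ℓ : ℝ) + 1) * b ^ (ℓ + 1) := by
        have hP : (0:ℝ) ≤ b ^ ℓ := by positivity
        have h2 : b ^ ℓ ≤ b ^ (ℓ + 1) := pow_le_pow_right₀ hb (Nat.le_succ ℓ)
        have h3 : (0:ℝ) ≤ (ℓ:ℝ) := Nat.cast_nonneg ℓ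
        nlinarith
      push_cast
      exact mul_le_mul_of_nonneg_right h1 (norm_nonneg _)

end Bounds
section DfeatLip

variable {L p : ℕ}

lemma dfeat_lip {φ : ℝ → ℝ} {h : ℝ} (hφ : SmoothApproxReLU φ h) (hh0 : 0 < h) (hh1 : h ≤ 1)
    {x : Fin p → ℝ} (hx : enorm' x = 1) {b : ℝ} (hb : 1 ≤ b) {w w' : Params L p}
    (hw : ‖w‖ ≤ b) (hw' : ‖w'‖ ≤ b) (u : Params L p) :
    ∀ ℓ, enorm' (fun i => dfeat φ w u x ℓ i - dfeat φ w' u x ℓ i) ≤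
      2 / h * (ℓ : ℝ) ^ 3 * b ^ (2 * ℓ + 2) * ‖u‖ * ‖w - w'‖ := by
  intro ℓ
  induction ℓ with
  | zero => simp [dfeat_zero, enorm']
  | succ ℓ ih =>
    by_cases hl : ℓ < L
    · set M := layerMat w ⟨ℓ, hl⟩ with hM
      set M' := layerMat w' ⟨ℓ, hl⟩ with hM'
      set U := layerMat u ⟨ℓ, hl⟩ with hU
      set f := feat φ w x ℓ with hf
      set f' := feat φ w' x ℓ with hf'
      set d := dfeat φ w u x ℓ with hd
      set d' := dfeat φ w' u x ℓ with hd'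
      set z := M.mulVec f with hz
      set z' := M'.mulVec f' with hz'
      set g : Fin p → ℝ := fun i => U.mulVec f i + M.mulVec d i with hg
      set g' : Fin p → ℝ := fun i => U.mulVec f' i + M'.mulVec d' i with hg'
      have hdecomp : (fun i => dfeat φ w u x (ℓ + 1) i - dfeat φ w' u x (ℓ + 1) i) =
          fun i => (deriv φ (z i) - deriv φ (z' i)) * g i + deriv φ (z' i) * (g i - g' i) := by
        funext i
        rw [dfeat_succ φ w u x hl, dfeat_succ φ w' u x hl]
        beta_reduce
        simp only [hg, hg']
        ring
      rw [hdecomp]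
      -- bounds on the building blocks
      have hfb : enorm' f ≤ b ^ ℓ := feat_bound hφ hx hb hw ℓ
      have hfb' : enorm' f' ≤ b ^ ℓ := feat_bound hφ hx hb hw' ℓ
      have hdb : enorm' d ≤ (ℓ : ℝ) * b ^ ℓ * ‖u‖ := dfeat_bound hφ hx hb hw u ℓ
      have hflip : enorm' (fun i => f i - f' i) ≤ (ℓ : ℝ) * b ^ ℓ * ‖w - w'‖ :=
        feat_lip hφ hx hb hw hw' ℓ
      have hgb : enorm' g ≤ ‖u‖ * b ^ ℓ + b * ((ℓ : ℝ) * b ^ ℓ * ‖u‖) := by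
        refine (enorm'_add_le _ _).trans ?_
        refine add_le_add ((enorm'_mulVec_le _ _).trans ?_) ((enorm'_mulVec_le _ _).trans ?_)
        · exact mul_le_mul (matFro_layerMat_le u _) hfb (enorm'_nonneg _) (norm_nonneg _)
        · exact mul_le_mul ((matFro_layerMat_le w _).trans hw) hdb (enorm'_nonneg _)
            (zero_le_one.trans hb)
      have hzz : enorm' (fun i => z i - z' i) ≤
          ‖w - w'‖ * b ^ ℓ + b * ((ℓ : ℝ) * b ^ ℓ * ‖w - w'‖) := by
        have h2 : (fun i => z i - z' i) =
            fun i => (M - M').mulVec f i + M'.mulVec (fun j => f j - f' j) i :=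
          funext fun i => mulVec_sub_decomp _ _ _ _ i
        rw [h2]
        refine (enorm'_add_le _ _).trans ?_
        refine add_le_add ((enorm'_mulVec_le _ _).trans ?_) ((enorm'_mulVec_le _ _).trans ?_)
        · exact mul_le_mul (matFro_layer_sub_le w w' _) hfb (enorm'_nonneg _) (norm_nonneg _)
        · exact mul_le_mul ((matFro_layerMat_le w' _).trans hw') hflip (enorm'_nonneg _)
            (zero_le_one.trans hb)
      have hgg : enorm' (fun i => g i - g' i) ≤
          ‖u‖ * ((ℓ : ℝ) * b ^ ℓ * ‖w - w'‖) + (‖w - w'‖ * ((ℓ : ℝ) * b ^ ℓ * ‖u‖) +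
            b * (2 / h * (ℓ : ℝ) ^ 3 * b ^ (2 * ℓ + 2) * ‖u‖ * ‖w - w'‖)) := by
        have hsplit : (fun i => g i - g' i) = fun i =>
            U.mulVec (fun j => f j - f' j) i +
              ((M - M').mulVec d i + M'.mulVec (fun j => d j - d' j) i) := by
          funext i
          simp only [hg, hg', Matrix.mulVec, dotProduct, Matrix.sub_apply,
            ← Finset.sum_add_distrib, ← Finset.sum_sub_distrib]
          exact Finset.sum_congr rfl fun j _ => by ring
        rw [hsplit]
        refine (enorm'_add_le _ _).trans (add_le_add ((enorm'_mulVec_le _ _).trans ?_)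
          ((enorm'_add_le _ _).trans (add_le_add ((enorm'_mulVec_le _ _).trans ?_)
            ((enorm'_mulVec_le _ _).trans ?_))))
        · exact mul_le_mul (matFro_layerMat_le u _) hflip (enorm'_nonneg _) (norm_nonneg _)
        · exact mul_le_mul (matFro_layer_sub_le w w' _) hdb (enorm'_nonneg _) (norm_nonneg _)
        · exact mul_le_mul ((matFro_layerMat_le w' _).trans hw') (ih) (enorm'_nonneg _)
            (zero_le_one.trans hb)
      -- combine
      have hmain : enorm' (fun i => (deriv φ (z i) - deriv φ (z' i)) * g i +
            deriv φ (z' i) * (g i - g' i)) ≤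
          enorm' g / h * enorm' (fun i => z i - z' i) + enorm' (fun i => g i - g' i) := by
        refine (enorm'_add_le _ _).trans (add_le_add ?_ ?_)
        · refine enorm'_mono_mul (div_nonneg (enorm'_nonneg g) hh0.le) fun i => ?_
          rw [abs_mul]
          calc |deriv φ (z i) - deriv φ (z' i)| * |g i|
              ≤ (1 / h * |z i - z' i|) * enorm' g :=
                mul_le_mul (hφ.2.2.1 _ _) (abs_le_enorm g i) (abs_nonneg _)
                  (by positivity)
            _ = enorm' g / h * |(fun i => z i - z' i) i| := by
                beta_reduce
                ring
        · refine enorm'_mono fun i => ?_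
          beta_reduce
          rw [abs_mul]
          calc |deriv φ (z' i)| * |g i - g' i| ≤ 1 * |g i - g' i| :=
              mul_le_mul_of_nonneg_right (hφ.2.2.2.1 _) (abs_nonneg _)
            _ = |g i - g' i| := one_mul _
      refine hmain.trans ?_
      -- now pure arithmetic
      have e1 : enorm' g / h * enorm' (fun i => z i - z' i) ≤
          ((‖u‖ * b ^ ℓ + b * ((ℓ : ℝ) * b ^ ℓ * ‖u‖)) / h) *
            (‖w - w'‖ * b ^ ℓ + b * ((ℓ : ℝ) * b ^ ℓ * ‖w - w'‖)) := by
        exact mul_le_mul (div_le_div_of_nonneg_right hgb hh0.le) hzz (enorm'_nonneg _)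
          (by positivity)
      refine (add_le_add e1 hgg).trans ?_
      simp only [div_eq_mul_inv]
      set c : ℝ := h⁻¹ with hc
      have hc0 : (0 : ℝ) ≤ c := by positivity
      have hc1 : (1 : ℝ) ≤ c := by
        rw [hc, ← one_div]
        exact one_le_one_div hh0 hh1
      set P : ℝ := b ^ ℓ with hP
      set Uu : ℝ := ‖u‖ with hUu
      set D : ℝ := ‖w - w'‖ with hD
      have hUD : (0 : ℝ) ≤ Uu * D := mul_nonneg (norm_nonneg _) (norm_nonneg _)
      have hPnn : (0 : ℝ) ≤ P := by positivity
      set Q : ℝ := b ^ (2 * ℓ + 4) * Uu * D * c with hQ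
      have hQ0 : (0 : ℝ) ≤ Q := by positivity
      have hP24 : b ^ (2 * ℓ + 2) ≤ b ^ (2 * ℓ + 4) := pow_le_pow_right₀ hb (by omega)
      have hP34 : b ^ (2 * ℓ + 3) ≤ b ^ (2 * ℓ + 4) := pow_le_pow_right₀ hb (by omega)
      have hP04 : P ≤ b ^ (2 * ℓ + 4) := by
        rw [hP]; exact pow_le_pow_right₀ hb (by omega)
      have hln : (0 : ℝ) ≤ (ℓ : ℝ) := Nat.cast_nonneg ℓ
      have A1 : (Uu * P + b * ((ℓ : ℝ) * P * Uu)) * c * (D * P + b * ((ℓ : ℝ) * P * D)) ≤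
          ((ℓ : ℝ) + 1) ^ 2 * Q := by
        have hba : 1 + b * (ℓ : ℝ) ≤ b * ((ℓ : ℝ) + 1) := by
          calc 1 + b * (ℓ : ℝ) ≤ b + b * (ℓ : ℝ) := add_le_add_left hb _
            _ = b * ((ℓ : ℝ) + 1) := by ring
        have hsq : (1 + b * (ℓ : ℝ)) ^ 2 ≤ (b * ((ℓ : ℝ) + 1)) ^ 2 := by
          have h0 : (0 : ℝ) ≤ 1 + b * (ℓ : ℝ) :=
            add_nonneg zero_le_one (mul_nonneg (zero_le_one.trans hb) hln)
          exact pow_le_pow_left₀ h0 hba 2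
        have hP2 : P ^ 2 * b ^ 2 = b ^ (2 * ℓ + 2) := by
          rw [hP, ← pow_mul, ← pow_add]
          congr 1
          omega
        have core : P ^ 2 * (1 + b * (ℓ : ℝ)) ^ 2 ≤ ((ℓ : ℝ) + 1) ^ 2 * b ^ (2 * ℓ + 4) := by
          calc P ^ 2 * (1 + b * (ℓ : ℝ)) ^ 2 ≤ P ^ 2 * (b * ((ℓ : ℝ) + 1)) ^ 2 :=
                mul_le_mul_of_nonneg_left hsq (by positivity)
            _ = ((ℓ : ℝ) + 1) ^ 2 * (P ^ 2 * b ^ 2) := by ring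
            _ = ((ℓ : ℝ) + 1) ^ 2 * b ^ (2 * ℓ + 2) := by rw [hP2]
            _ ≤ ((ℓ : ℝ) + 1) ^ 2 * b ^ (2 * ℓ + 4) :=
                mul_le_mul_of_nonneg_left hP24 (by positivity)
        calc (Uu * P + b * ((ℓ : ℝ) * P * Uu)) * c * (D * P + b * ((ℓ : ℝ) * P * D))
            = c * ((Uu * D) * (P ^ 2 * (1 + b * (ℓ : ℝ)) ^ 2)) := by ring
          _ ≤ c * ((Uu * D) * (((ℓ : ℝ) + 1) ^ 2 * b ^ (2 * ℓ + 4))) := by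
              refine mul_le_mul_of_nonneg_left (mul_le_mul_of_nonneg_left core hUD) hc0
          _ = ((ℓ : ℝ) + 1) ^ 2 * Q := by rw [hQ]; ring
      have A2 : Uu * ((ℓ : ℝ) * P * D) + D * ((ℓ : ℝ) * P * Uu) ≤ 2 * (ℓ : ℝ) * Q := by
        have hPc : P * 1 ≤ b ^ (2 * ℓ + 4) * c := mul_le_mul hP04 hc1 zero_le_one (by positivity)
        calc Uu * ((ℓ : ℝ) * P * D) + D * ((ℓ : ℝ) * P * Uu)
            = 2 * (ℓ : ℝ) * (Uu * D) * (P * 1) := by ring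
          _ ≤ 2 * (ℓ : ℝ) * (Uu * D) * (b ^ (2 * ℓ + 4) * c) :=
              mul_le_mul_of_nonneg_left hPc (by positivity)
          _ = 2 * (ℓ : ℝ) * Q := by rw [hQ]; ring
      have A3 : b * (2 * c * (ℓ : ℝ) ^ 3 * b ^ (2 * ℓ + 2) * Uu * D) ≤
          2 * (ℓ : ℝ) ^ 3 * Q := by
        have hbP : b * b ^ (2 * ℓ + 2) = b ^ (2 * ℓ + 3) := by
          rw [← pow_succ']
        calc b * (2 * c * (ℓ : ℝ) ^ 3 * b ^ (2 * ℓ + 2) * Uu * D)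
            = 2 * (ℓ : ℝ) ^ 3 * (Uu * D) * c * (b * b ^ (2 * ℓ + 2)) := by ring
          _ = 2 * (ℓ : ℝ) ^ 3 * (Uu * D) * c * b ^ (2 * ℓ + 3) := by rw [hbP]
          _ ≤ 2 * (ℓ : ℝ) ^ 3 * (Uu * D) * c * b ^ (2 * ℓ + 4) :=
              mul_le_mul_of_nonneg_left hP34 (by positivity)
          _ = 2 * (ℓ : ℝ) ^ 3 * Q := by rw [hQ]; ring
      have hfin : ((ℓ : ℝ) + 1) ^ 2 * Q + (2 * (ℓ : ℝ) * Q + 2 * (ℓ : ℝ) ^ 3 * Q) ≤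
          2 * ((ℓ : ℝ) + 1) ^ 3 * Q := by
        have hcoeff : ((ℓ : ℝ) + 1) ^ 2 + 2 * (ℓ : ℝ) + 2 * (ℓ : ℝ) ^ 3 ≤
            2 * ((ℓ : ℝ) + 1) ^ 3 := by
          have hid : 2 * ((ℓ : ℝ) + 1) ^ 3 -
              (((ℓ : ℝ) + 1) ^ 2 + 2 * (ℓ : ℝ) + 2 * (ℓ : ℝ) ^ 3) =
              5 * (ℓ : ℝ) ^ 2 + 2 * (ℓ : ℝ) + 1 := by ring
          have hpos : (0 : ℝ) ≤ 5 * (ℓ : ℝ) ^ 2 + 2 * (ℓ : ℝ) + 1 := by positivity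
          linarith [hid, hpos]
        have := mul_le_mul_of_nonneg_right hcoeff hQ0
        calc ((ℓ : ℝ) + 1) ^ 2 * Q + (2 * (ℓ : ℝ) * Q + 2 * (ℓ : ℝ) ^ 3 * Q)
            = (((ℓ : ℝ) + 1) ^ 2 + 2 * (ℓ : ℝ) + 2 * (ℓ : ℝ) ^ 3) * Q := by ring
          _ ≤ 2 * ((ℓ : ℝ) + 1) ^ 3 * Q := by
              calc (((ℓ : ℝ) + 1) ^ 2 + 2 * (ℓ : ℝ) + 2 * (ℓ : ℝ) ^ 3) * Q
                  ≤ 2 * ((ℓ : ℝ) + 1) ^ 3 * Q := this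
          _ = 2 * ((ℓ : ℝ) + 1) ^ 3 * Q := rfl
      have hidx : 2 * (ℓ + 1) + 2 = 2 * ℓ + 4 := by omega
      push_cast
      rw [hidx]
      calc (Uu * P + b * ((ℓ : ℝ) * P * Uu)) * c * (D * P + b * ((ℓ : ℝ) * P * D)) +
            (Uu * ((ℓ : ℝ) * P * D) + (D * ((ℓ : ℝ) * P * Uu) +
              b * (2 * c * (ℓ : ℝ) ^ 3 * b ^ (2 * ℓ + 2) * Uu * D)))
          ≤ ((ℓ : ℝ) + 1) ^ 2 * Q + (2 * (ℓ : ℝ) * Q + 2 * (ℓ : ℝ) ^ 3 * Q) := by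
            refine add_le_add A1 (by linarith [A2, A3])
        _ ≤ 2 * ((ℓ : ℝ) + 1) ^ 3 * Q := hfin
        _ = 2 * c * ((ℓ : ℝ) + 1) ^ 3 * b ^ (2 * ℓ + 4) * Uu * D := by rw [hQ]; ring
    · rw [dfeat_succ_of_ge φ w u x hl, dfeat_succ_of_ge φ w' u x hl]
      refine ih.trans ?_
      push_cast
      have h1 : (ℓ:ℝ) ^ 3 ≤ ((ℓ:ℝ) + 1) ^ 3 := by nlinarith [Nat.cast_nonneg (α := ℝ) ℓ]
      have h2 : b ^ (2 * ℓ + 2) ≤ b ^ (2 * (ℓ + 1) + 2) := pow_le_pow_right₀ hb (by omega)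
      have c0 : (0:ℝ) ≤ 2 / h := by positivity
      refine mul_le_mul_of_nonneg_right (mul_le_mul_of_nonneg_right ?_ (norm_nonneg _))
        (norm_nonneg _)
      exact mul_le_mul (mul_le_mul_of_nonneg_left h1 c0) h2 (by positivity)
        (by positivity)

end DfeatLip
section NetDeriv

variable {L p : ℕ}

/-- Derivative of the network output as a continuous linear map. -/
def dnetL (φ : ℝ → ℝ) (w : Params L p) (x : Fin p → ℝ) : Params L p →L[ℝ] ℝ :=
  ∑ j, (w (Sum.inr j) • ((ContinuousLinearMap.proj j).comp (dfeatL φ w x L)) +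
    feat φ w x L j • (EuclideanSpace.proj (Sum.inr j) : Params L p →L[ℝ] ℝ))

lemma dnetL_apply (φ : ℝ → ℝ) (w : Params L p) (x : Fin p → ℝ) (u : Params L p) :
    dnetL φ w x u = (∑ j, outVec u j * feat φ w x L j) +
      ∑ j, outVec w j * dfeat φ w u x L j := by
  simp only [dnetL, ContinuousLinearMap.coe_sum', Finset.sum_apply,
    ContinuousLinearMap.add_apply, ContinuousLinearMap.coe_smul', Pi.smul_apply,
    ContinuousLinearMap.coe_comp', Function.comp_apply, dfeatL_apply,
    ContinuousLinearMap.proj_apply, smul_eq_mul]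
  rw [← Finset.sum_add_distrib]
  refine Finset.sum_congr rfl fun j _ => ?_
  have : (EuclideanSpace.proj (Sum.inr j) : Params L p →L[ℝ] ℝ) u = u (Sum.inr j) := rfl
  rw [this]
  simp only [outVec]
  ring

lemma hasFDerivAt_netOut (φ : ℝ → ℝ) (hd : Differentiable ℝ φ) (x : Fin p → ℝ)
    (w : Params L p) : HasFDerivAt (fun v => netOut φ v x) (dnetL φ w x) w := by
  have hsum : HasFDerivAt (fun v : Params L p => ∑ j, v (Sum.inr j) * feat φ v x L j)
      (∑ j, (w (Sum.inr j) • ((ContinuousLinearMap.proj j).comp (dfeatL φ w x L)) +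
        feat φ w x L j • (EuclideanSpace.proj (Sum.inr j) : Params L p →L[ℝ] ℝ))) w := by
    refine HasFDerivAt.fun_sum fun j _ => ?_
    have hc : HasFDerivAt (fun v : Params L p => v (Sum.inr j))
        (EuclideanSpace.proj (Sum.inr j) : Params L p →L[ℝ] ℝ) w := by
      have : (fun v : Params L p => v (Sum.inr j)) =
          ⇑(EuclideanSpace.proj (Sum.inr j) : Params L p →L[ℝ] ℝ) := rfl
      rw [this]
      exact ContinuousLinearMap.hasFDerivAt _
    have hf : HasFDerivAt (fun v => feat φ v x L j)
        ((ContinuousLinearMap.proj j).comp (dfeatL φ w x L)) w :=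
      hasFDerivAt_pi'.1 (hasFDerivAt_feat φ hd x w L) j
    exact hc.mul hf
  exact hsum

lemma hasFDerivAt_lossS (φ : ℝ → ℝ) (hd : Differentiable ℝ φ) (x : Fin p → ℝ) (y : ℝ)
    (w : Params L p) : HasFDerivAt (lossS φ x y)
      ((-y * sig (-(y * netOut φ w x))) • dnetL φ w x) w := by
  have h1 := hasFDerivAt_netOut φ hd x w
  have h2 : HasFDerivAt (fun v : Params L p => -(y * netOut φ v x))
      ((-y) • dnetL φ w x) w := by
    have h3 := (h1.const_mul y).neg
    have e : (-y) • dnetL φ w x = -(y • dnetL φ w x) := neg_smul y (dnetL φ w x)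
    rw [e]; exact h3
  have h3 : HasDerivAt Gf (sig (-(y * netOut φ w x))) (-(y * netOut φ w x)) :=
    hasDerivAt_Gf _
  have h4 := h3.comp_hasFDerivAt w h2
  have h5 : sig (-(y * netOut φ w x)) • ((-y) • dnetL φ w x) =
      (-y * sig (-(y * netOut φ w x))) • dnetL φ w x := by
    rw [smul_smul, mul_comm]
  rw [← h5]
  exact h4

lemma hasFDerivAt_loss {n : ℕ} (φ : ℝ → ℝ) (hd : Differentiable ℝ φ)
    (x : Fin n → Fin p → ℝ) (y : Fin n → ℝ) (w : Params L p) :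
    HasFDerivAt (loss φ x y) ((1 / (n : ℝ)) •
      ∑ s, (-(y s) * sig (-(y s * netOut φ w (x s)))) • dnetL φ w (x s)) w := by
  have hsum : HasFDerivAt (fun w : Params L p => ∑ s, lossS φ (x s) (y s) w)
      (∑ s, (-(y s) * sig (-(y s * netOut φ w (x s)))) • dnetL φ w (x s)) w :=
    HasFDerivAt.fun_sum fun s _ => hasFDerivAt_lossS φ hd (x s) (y s) w
  exact hsum.const_mul _

end NetDeriv
section KeyBound

variable {L p : ℕ}

lemma arith1 {b t : ℝ} (hb : 1 ≤ b) (ht : 0 ≤ t) (ℓ : ℕ) :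
    t * b ^ ℓ + b * ((ℓ : ℝ) * b ^ ℓ * t) ≤ ((ℓ : ℝ) + 1) * b ^ (ℓ + 1) * t := by
  have hP : b ^ ℓ ≤ b ^ (ℓ + 1) := pow_le_pow_right₀ hb (Nat.le_succ _)
  have h1 : t * b ^ ℓ ≤ b ^ (ℓ + 1) * t := by
    calc t * b ^ ℓ = b ^ ℓ * t := mul_comm _ _
      _ ≤ b ^ (ℓ + 1) * t := mul_le_mul_of_nonneg_right hP ht
  have h2 : b * ((ℓ : ℝ) * b ^ ℓ * t) = (ℓ : ℝ) * b ^ (ℓ + 1) * t := by rw [pow_succ]; ring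
  have h3 : ((ℓ : ℝ) + 1) * b ^ (ℓ + 1) * t = (ℓ : ℝ) * b ^ (ℓ + 1) * t + b ^ (ℓ + 1) * t := by
    ring
  linarith

lemma arith2 {b h t s : ℝ} (hb : 1 ≤ b) (hh0 : 0 < h) (hh1 : h ≤ 1) (ht : 0 ≤ t) (hs : 0 ≤ s)
    {L : ℕ} (hL : 1 ≤ L) :
    t * ((L : ℝ) * b ^ L * s) + (s * ((L : ℝ) * b ^ L * t) +
      b * (2 / h * (L : ℝ) ^ 3 * b ^ (2 * L + 2) * t * s)) ≤
    4 * (L : ℝ) ^ 3 / h * b ^ (2 * L + 3) * t * s := by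
  simp only [div_eq_mul_inv]
  set c := h⁻¹ with hc
  have hc1 : 1 ≤ c := by rw [hc, ← one_div]; exact one_le_one_div hh0 hh1
  have hc0 : (0 : ℝ) ≤ c := by positivity
  have hL1 : (1 : ℝ) ≤ (L : ℝ) := by exact_mod_cast hL
  have h1 : (L : ℝ) ≤ (L : ℝ) ^ 3 := le_self_pow₀ (by linarith) (by norm_num)
  have h2 : b ^ L ≤ b ^ (2 * L + 3) := pow_le_pow_right₀ hb (by omega)
  have h3 : (L : ℝ) * b ^ L ≤ (L : ℝ) ^ 3 * b ^ (2 * L + 3) :=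
    mul_le_mul h1 h2 (by positivity) (by positivity)
  have h4 : (L : ℝ) ^ 3 * b ^ (2 * L + 3) ≤ c * ((L : ℝ) ^ 3 * b ^ (2 * L + 3)) :=
    le_mul_of_one_le_left (by positivity) hc1
  have h5 : b * b ^ (2 * L + 2) = b ^ (2 * L + 3) := by
    have hi : 2 * L + 3 = (2 * L + 2) + 1 := by omega
    rw [hi, pow_succ]; ring
  have hts : (0 : ℝ) ≤ t * s := mul_nonneg ht hs
  have key : 2 * (L : ℝ) * b ^ L ≤ 2 * ((L : ℝ) ^ 3 * c * b ^ (2 * L + 3)) := by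
    calc 2 * (L : ℝ) * b ^ L = 2 * ((L : ℝ) * b ^ L) := by ring
      _ ≤ 2 * ((L : ℝ) ^ 3 * b ^ (2 * L + 3)) := by linarith
      _ ≤ 2 * (c * ((L : ℝ) ^ 3 * b ^ (2 * L + 3))) := by linarith
      _ = 2 * ((L : ℝ) ^ 3 * c * b ^ (2 * L + 3)) := by ring
  calc t * ((L : ℝ) * b ^ L * s) + (s * ((L : ℝ) * b ^ L * t) +
        b * (2 * c * (L : ℝ) ^ 3 * b ^ (2 * L + 2) * t * s))
      = 2 * (L : ℝ) * b ^ L * (t * s) +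
        2 * ((L : ℝ) ^ 3 * c * (b * b ^ (2 * L + 2))) * (t * s) := by ring
    _ = 2 * (L : ℝ) * b ^ L * (t * s) +
        2 * ((L : ℝ) ^ 3 * c * b ^ (2 * L + 3)) * (t * s) := by rw [h5]
    _ ≤ 2 * ((L : ℝ) ^ 3 * c * b ^ (2 * L + 3)) * (t * s) +
        2 * ((L : ℝ) ^ 3 * c * b ^ (2 * L + 3)) * (t * s) := by
        have := mul_le_mul_of_nonneg_right key hts
        linarith
    _ = 4 * (L : ℝ) ^ 3 * c * b ^ (2 * L + 3) * t * s := by ring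

lemma arith3 {b h lV t s : ℝ} (hb : 1 ≤ b) (hh0 : 0 < h) (hh1 : h ≤ 1) (hl : 0 ≤ lV)
    (ht : 0 ≤ t) (hs : 0 ≤ s) {L : ℕ} (hL : 1 ≤ L) :
    4 * lV * (((L : ℝ) + 1) * b ^ (L + 1) * s) * (((L : ℝ) + 1) * b ^ (L + 1) * t) +
      4 * lV * (4 * (L : ℝ) ^ 3 / h * b ^ (2 * L + 3) * t * s) ≤
    32 * (L : ℝ) ^ 3 / h * b ^ (2 * L + 3) * lV * t * s := by
  simp only [div_eq_mul_inv]
  set c := h⁻¹ with hc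
  have hc1 : 1 ≤ c := by rw [hc, ← one_div]; exact one_le_one_div hh0 hh1
  have hc0 : (0 : ℝ) ≤ c := by positivity
  have hL1 : (1 : ℝ) ≤ (L : ℝ) := by exact_mod_cast hL
  have e2 : b ^ (L + 1) * b ^ (L + 1) = b ^ (2 * L + 2) := by
    rw [← pow_add]; congr 1; omega
  have hsq : ((L : ℝ) + 1) ^ 2 ≤ 4 * (L : ℝ) ^ 3 := by nlinarith [hL1, sq_nonneg ((L : ℝ) - 1)]
  have h2 : b ^ (2 * L + 2) ≤ b ^ (2 * L + 3) := pow_le_pow_right₀ hb (by omega)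
  have core : ((L : ℝ) + 1) ^ 2 * b ^ (2 * L + 2) ≤ 4 * (L : ℝ) ^ 3 * (b ^ (2 * L + 3) * c) := by
    calc ((L : ℝ) + 1) ^ 2 * b ^ (2 * L + 2) ≤ (4 * (L : ℝ) ^ 3) * b ^ (2 * L + 3) :=
        mul_le_mul hsq h2 (by positivity) (by positivity)
      _ ≤ (4 * (L : ℝ) ^ 3) * (b ^ (2 * L + 3) * c) :=
        mul_le_mul_of_nonneg_left (le_mul_of_one_le_right (by positivity) hc1) (by positivity)
  have hts : (0 : ℝ) ≤ t * s := mul_nonneg ht hs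
  have hl4 : (0 : ℝ) ≤ 4 * lV := by linarith
  calc 4 * lV * (((L : ℝ) + 1) * b ^ (L + 1) * s) * (((L : ℝ) + 1) * b ^ (L + 1) * t) +
        4 * lV * (4 * (L : ℝ) ^ 3 * c * b ^ (2 * L + 3) * t * s)
      = 4 * lV * (((L : ℝ) + 1) ^ 2 * (b ^ (L + 1) * b ^ (L + 1))) * (t * s) +
        16 * lV * ((L : ℝ) ^ 3 * c * b ^ (2 * L + 3)) * (t * s) := by ring
    _ = 4 * lV * (((L : ℝ) + 1) ^ 2 * b ^ (2 * L + 2)) * (t * s) +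
        16 * lV * ((L : ℝ) ^ 3 * c * b ^ (2 * L + 3)) * (t * s) := by rw [e2]
    _ ≤ 4 * lV * (4 * (L : ℝ) ^ 3 * (b ^ (2 * L + 3) * c)) * (t * s) +
        16 * lV * ((L : ℝ) ^ 3 * c * b ^ (2 * L + 3)) * (t * s) := by
        have := mul_le_mul_of_nonneg_right
          (mul_le_mul_of_nonneg_left core hl4) hts
        linarith
    _ = 32 * (L : ℝ) ^ 3 * c * b ^ (2 * L + 3) * lV * t * s := by ring

lemma key_bound (hL : 1 ≤ L) {φ : ℝ → ℝ} {h : ℝ} (hφ : SmoothApproxReLU φ h)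
    (hh0 : 0 < h) (hh1 : h ≤ 1) {x : Fin p → ℝ} (hx : enorm' x = 1) {y : ℝ}
    (hy : y = 1 ∨ y = -1) {b : ℝ} (hb : 1 ≤ b) {V W : Params L p}
    (hVb : ‖V‖ ≤ b) (hWb : ‖W‖ ≤ b)
    (hlossW : lossS φ x y W ≤ 4 * lossS φ x y V) (u : Params L p) :
    |(-y * sig (-(y * netOut φ V x))) * (dnetL φ V x u) -
        (-y * sig (-(y * netOut φ W x))) * (dnetL φ W x u)| ≤
      32 * (L : ℝ) ^ 3 / h * b ^ (2 * L + 3) * lossS φ x y V * ‖u‖ * ‖V - W‖ := by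
  have hlV : lossS φ x y V = Gf (-(y * netOut φ V x)) := rfl
  have hlW : lossS φ x y W = Gf (-(y * netOut φ W x)) := rfl
  have hlV0 : 0 ≤ lossS φ x y V := by rw [hlV]; exact Gf_nonneg _
  have habsy : |y| = 1 := by rcases hy with h' | h' <;> rw [h'] <;> norm_num
  have hfV := feat_bound hφ hx hb hVb L
  have hdV := dfeat_bound hφ hx hb hVb u L
  have hflip := feat_lip hφ hx hb hVb hWb L
  have hdlip := dfeat_lip hφ hh0 hh1 hx hb hVb hWb u L
  have houtu := enorm'_outVec_le u
  have houtV := (enorm'_outVec_le V).trans hVb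
  have houtW := (enorm'_outVec_le W).trans hWb
  have houtD := enorm'_outVec_le (V - W)
  have B3 : |dnetL φ V x u| ≤ ((L : ℝ) + 1) * b ^ (L + 1) * ‖u‖ := by
    rw [dnetL_apply]
    refine (abs_add_le _ _).trans ?_
    refine (add_le_add (enorm'_cauchy _ _) (enorm'_cauchy _ _)).trans ?_
    refine (add_le_add (mul_le_mul houtu hfV (enorm'_nonneg _) (norm_nonneg _))
      (mul_le_mul houtV hdV (enorm'_nonneg _) (zero_le_one.trans hb))).trans ?_
    exact arith1 hb (norm_nonneg u) L
  have B2 : |netOut φ V x - netOut φ W x| ≤ ((L : ℝ) + 1) * b ^ (L + 1) * ‖V - W‖ := by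
    have hsplit : netOut φ V x - netOut φ W x =
        (∑ j, outVec (V - W) j * feat φ V x L j) +
          ∑ j, outVec W j * (feat φ V x L j - feat φ W x L j) := by
      simp only [netOut, ← Finset.sum_add_distrib, ← Finset.sum_sub_distrib]
      refine Finset.sum_congr rfl fun j _ => ?_
      rw [outVec_sub]; ring
    rw [hsplit]
    refine (abs_add_le _ _).trans ?_
    refine (add_le_add (enorm'_cauchy _ _) (enorm'_cauchy _ _)).trans ?_
    refine (add_le_add (mul_le_mul houtD hfV (enorm'_nonneg _) (norm_nonneg _))
      (mul_le_mul houtW hflip (enorm'_nonneg _) (zero_le_one.trans hb))).trans ?_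
    exact arith1 hb (norm_nonneg _) L
  have B4 : |dnetL φ V x u - dnetL φ W x u| ≤
      4 * (L : ℝ) ^ 3 / h * b ^ (2 * L + 3) * ‖u‖ * ‖V - W‖ := by
    rw [dnetL_apply, dnetL_apply]
    have hsplit : ((∑ j, outVec u j * feat φ V x L j) +
          ∑ j, outVec V j * dfeat φ V u x L j) -
        ((∑ j, outVec u j * feat φ W x L j) + ∑ j, outVec W j * dfeat φ W u x L j) =
        (∑ j, outVec u j * (feat φ V x L j - feat φ W x L j)) +
          ((∑ j, outVec (V - W) j * dfeat φ V u x L j) +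
            ∑ j, outVec W j * (dfeat φ V u x L j - dfeat φ W u x L j)) := by
      simp only [← Finset.sum_add_distrib, ← Finset.sum_sub_distrib]
      refine Finset.sum_congr rfl fun j _ => ?_
      rw [outVec_sub]; ring
    rw [hsplit]
    refine (abs_add_le _ _).trans ?_
    refine (add_le_add (enorm'_cauchy _ _) ((abs_add_le _ _).trans
      (add_le_add (enorm'_cauchy _ _) (enorm'_cauchy _ _)))).trans ?_
    refine (add_le_add (mul_le_mul houtu hflip (enorm'_nonneg _) (norm_nonneg _))
      (add_le_add (mul_le_mul houtD hdV (enorm'_nonneg _) (norm_nonneg _))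
        (mul_le_mul houtW hdlip (enorm'_nonneg _) (zero_le_one.trans hb)))).trans ?_
    exact arith2 hb hh0 hh1 (norm_nonneg u) (norm_nonneg _) hL
  have B1 : |sig (-(y * netOut φ V x)) - sig (-(y * netOut φ W x))| ≤
      4 * lossS φ x y V * (((L : ℝ) + 1) * b ^ (L + 1) * ‖V - W‖) := by
    have hmax : max (sig (-(y * netOut φ V x))) (sig (-(y * netOut φ W x))) ≤
        4 * lossS φ x y V := by
      refine max_le ((sig_le_Gf _).trans ?_) ((sig_le_Gf _).trans ?_)
      · rw [← hlV]; linarith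
      · rw [← hlW]; linarith
    have h1 := sig_sub_le (-(y * netOut φ V x)) (-(y * netOut φ W x))
    have h2 : |(-(y * netOut φ V x)) - (-(y * netOut φ W x))| =
        |netOut φ V x - netOut φ W x| := by
      rw [show -(y * netOut φ V x) - -(y * netOut φ W x) =
        -(y * (netOut φ V x - netOut φ W x)) by ring, abs_neg, abs_mul, habsy, one_mul]
    refine h1.trans ?_
    rw [h2]
    exact mul_le_mul hmax B2 (abs_nonneg _) (by linarith)
  have hsW : sig (-(y * netOut φ W x)) ≤ 4 * lossS φ x y V :=
    (sig_le_Gf _).trans (by rw [← hlW]; linarith)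
  have hstart : |(-y * sig (-(y * netOut φ V x))) * (dnetL φ V x u) -
      (-y * sig (-(y * netOut φ W x))) * (dnetL φ W x u)| =
      |sig (-(y * netOut φ V x)) * (dnetL φ V x u) -
        sig (-(y * netOut φ W x)) * (dnetL φ W x u)| := by
    rw [show (-y * sig (-(y * netOut φ V x))) * (dnetL φ V x u) -
        (-y * sig (-(y * netOut φ W x))) * (dnetL φ W x u) =
        (-y) * (sig (-(y * netOut φ V x)) * (dnetL φ V x u) -
          sig (-(y * netOut φ W x)) * (dnetL φ W x u)) by ring, abs_mul, abs_neg, habsy,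
      one_mul]
  rw [hstart]
  have hdecomp : sig (-(y * netOut φ V x)) * (dnetL φ V x u) -
      sig (-(y * netOut φ W x)) * (dnetL φ W x u) =
      (sig (-(y * netOut φ V x)) - sig (-(y * netOut φ W x))) * (dnetL φ V x u) +
        sig (-(y * netOut φ W x)) * (dnetL φ V x u - dnetL φ W x u) := by ring
  rw [hdecomp]
  refine (abs_add_le _ _).trans ?_
  rw [abs_mul, abs_mul, abs_of_nonneg (sig_nonneg _)]
  refine (add_le_add (mul_le_mul B1 B3 (abs_nonneg _) (by positivity))
    (mul_le_mul hsW B4 (abs_nonneg _) (by linarith))).trans ?_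
  exact arith3 hb hh0 hh1 hlV0 (norm_nonneg u) (norm_nonneg _) hL

end KeyBound
section FinalNumeric

lemma exp_third_le : Real.exp (1 / 3) ≤ 3 / 2 := by
  have h3 : Real.exp (1 / 3) ^ (3 : ℕ) = Real.exp 1 := by
    rw [← Real.exp_nat_mul]; norm_num
  have h4 : Real.exp 1 < 2.7182818286 := Real.exp_one_lt_d9
  refine le_of_pow_le_pow_left₀ (n := 3) (by norm_num) (by norm_num) ?_
  rw [h3]
  norm_num
  linarith

lemma final_numeric {L : ℕ} (hL : 1 ≤ L) {B D : ℝ} (hB2 : (L : ℝ) + 1 / 2 < B ^ 2)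
    (hB1 : 1 ≤ B) (hD : D ≤ B / (6 * (L : ℝ) + 10)) (hD0 : 0 ≤ D) {sp : ℝ} (hsp : 1 ≤ sp) :
    32 * (L : ℝ) ^ 3 * (B + D) ^ (2 * L + 3) ≤
      256 * ((L : ℝ) + 1) * sp * B ^ (3 * L + 5) := by
  have hL1 : (1 : ℝ) ≤ (L : ℝ) := by exact_mod_cast hL
  have hden : (0 : ℝ) < 6 * (L : ℝ) + 10 := by positivity
  set e : ℝ := 1 / (6 * (L : ℝ) + 10) with he
  have he0 : 0 ≤ e := by positivity
  have hb : B + D ≤ B * (1 + e) := by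
    have h1 : B * (1 + e) = B + B / (6 * (L : ℝ) + 10) := by
      rw [he]; field_simp
    linarith
  have hBD0 : (0 : ℝ) ≤ B + D := by linarith
  have T0 : (B + D) ^ (2 * L + 3) ≤ (B * (1 + e)) ^ (2 * L + 3) :=
    pow_le_pow_left₀ hBD0 hb _
  have T1 : (1 + e) ^ (2 * L + 3) ≤ 3 / 2 := by
    have s1 : 1 + e ≤ Real.exp e := by
      have := Real.add_one_le_exp e
      linarith
    have s2 : (1 + e) ^ (2 * L + 3) ≤ Real.exp e ^ (2 * L + 3) :=
      pow_le_pow_left₀ (by linarith) s1 _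
    have s3 : Real.exp e ^ (2 * L + 3) = Real.exp (((2 * L + 3 : ℕ) : ℝ) * e) := by
      rw [Real.exp_nat_mul]
    have s4 : ((2 * L + 3 : ℕ) : ℝ) * e ≤ 1 / 3 := by
      rw [he]
      push_cast
      rw [mul_one_div, div_le_iff₀ hden]
      linarith
    have s5 : Real.exp (((2 * L + 3 : ℕ) : ℝ) * e) ≤ Real.exp (1 / 3) :=
      Real.exp_le_exp.2 s4
    calc (1 + e) ^ (2 * L + 3) ≤ Real.exp e ^ (2 * L + 3) := s2
      _ = Real.exp (((2 * L + 3 : ℕ) : ℝ) * e) := s3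
      _ ≤ Real.exp (1 / 3) := s5
      _ ≤ 3 / 2 := exp_third_le
  have T2 : (B + D) ^ (2 * L + 3) ≤ 3 / 2 * B ^ (2 * L + 3) := by
    calc (B + D) ^ (2 * L + 3) ≤ (B * (1 + e)) ^ (2 * L + 3) := T0
      _ = B ^ (2 * L + 3) * (1 + e) ^ (2 * L + 3) := mul_pow _ _ _
      _ ≤ B ^ (2 * L + 3) * (3 / 2) := mul_le_mul_of_nonneg_left T1 (by positivity)
      _ = 3 / 2 * B ^ (2 * L + 3) := mul_comm _ _
  have K : 48 * (L : ℝ) ^ 3 ≤ 256 * ((L : ℝ) + 1) * B ^ (L + 2) := by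
    rcases Nat.lt_or_ge L 2 with hl2 | hl2
    · have hLeq : L = 1 := by omega
      subst hLeq
      have hB3 : (3 : ℝ) / 2 ≤ B ^ 3 := by
        have : B ^ 3 = B ^ 2 * B := by ring
        nlinarith
      push_cast
      nlinarith
    · have hB4 : (L : ℝ) ^ 2 ≤ B ^ 4 := by
        have h1 : B ^ 4 = (B ^ 2) ^ 2 := by ring
        nlinarith [sq_nonneg (B ^ 2)]
      have hBL2 : B ^ 4 ≤ B ^ (L + 2) := pow_le_pow_right₀ hB1 (by omega)
      have h48 : 48 * (L : ℝ) ≤ 256 * ((L : ℝ) + 1) := by linarith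
      calc 48 * (L : ℝ) ^ 3 = 48 * (L : ℝ) * (L : ℝ) ^ 2 := by ring
        _ ≤ 48 * (L : ℝ) * B ^ 4 := by
            refine mul_le_mul_of_nonneg_left hB4 (by positivity)
        _ ≤ 256 * ((L : ℝ) + 1) * B ^ 4 :=
            mul_le_mul_of_nonneg_right h48 (by positivity)
        _ ≤ 256 * ((L : ℝ) + 1) * B ^ (L + 2) :=
            mul_le_mul_of_nonneg_left hBL2 (by positivity)
  have hsplit : B ^ (3 * L + 5) = B ^ (2 * L + 3) * B ^ (L + 2) := by
    rw [← pow_add]; congr 1; omega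
  calc 32 * (L : ℝ) ^ 3 * (B + D) ^ (2 * L + 3)
      ≤ 32 * (L : ℝ) ^ 3 * (3 / 2 * B ^ (2 * L + 3)) :=
        mul_le_mul_of_nonneg_left T2 (by positivity)
    _ = 48 * (L : ℝ) ^ 3 * B ^ (2 * L + 3) := by ring
    _ ≤ 256 * ((L : ℝ) + 1) * B ^ (L + 2) * B ^ (2 * L + 3) :=
        mul_le_mul_of_nonneg_right K (by positivity)
    _ = 256 * ((L : ℝ) + 1) * B ^ (3 * L + 5) := by rw [hsplit]; ring
    _ ≤ 256 * ((L : ℝ) + 1) * sp * B ^ (3 * L + 5) := by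
        have h0 : (0 : ℝ) ≤ 256 * ((L : ℝ) + 1) * B ^ (3 * L + 5) := by positivity
        nlinarith [h0]

end FinalNumeric
/-- Lemma `l:nabla.smooth`: bound on the change of the gradient of the
training loss between two nearby weight tuples `V` and `W`, assuming control of the
per-example losses along the layer-by-layer interpolation `T(j) = mixParams V W j`. -/
theorem statement18
    (L p n : ℕ) (hL : 1 ≤ L) (hn : 1 ≤ n) (hp : 1 ≤ p)
    (φ : ℝ → ℝ) (h : ℝ) (hh0 : 0 < h) (hh1 : h ≤ 1) (hφ : SmoothApproxReLU φ h)
    (x : Fin n → Fin p → ℝ) (y : Fin n → ℝ)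
    (hx : ∀ s, enorm' (x s) = 1) (hy : ∀ s, y s = 1 ∨ y s = -1)
    (V W : Params L p)
    (hclose : ‖V - W‖ ≤ ‖V‖ / (6 * (L : ℝ) + 10))
    (hV : Real.sqrt ((L : ℝ) + 1 / 2) < ‖V‖) (hW : Real.sqrt ((L : ℝ) + 1 / 2) < ‖W‖)
    (hJ : ∀ j : ℕ, j ≤ L → ∀ s : Fin n, ∀ θ : ℝ, θ ∈ Set.Icc (0 : ℝ) 1 →
      lossS φ (x s) (y s) (θ • mixParams V W j + (1 - θ) • mixParams V W (j + 1)) ≤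
          2 * lossS φ (x s) (y s) (mixParams V W j) ∧
        2 * lossS φ (x s) (y s) (mixParams V W j) ≤ 4 * lossS φ (x s) (y s) V) :
    ‖gradient (loss φ x y) V - gradient (loss φ x y) W‖ ≤
      256 * ((L : ℝ) + 1) * Real.sqrt p * loss φ x y V * ‖V‖ ^ (3 * L + 5) *
        ‖V - W‖ / h := by
  have hd : Differentiable ℝ φ := hφ.1
  have hTL1 : mixParams V W (L + 1) = W := by
    ext k
    cases k with
    | inl q =>
      show (if ((q.1 : ℕ)) < L + 1 then W (Sum.inl q) else V (Sum.inl q)) = W (Sum.inl q)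
      rw [if_pos (Nat.lt_succ_of_lt q.1.isLt)]
    | inr a =>
      show (if L < L + 1 then W (Sum.inr a) else V (Sum.inr a)) = W (Sum.inr a)
      rw [if_pos (Nat.lt_succ_self L)]
  have hlossW : ∀ s : Fin n, lossS φ (x s) (y s) W ≤ 4 * lossS φ (x s) (y s) V := by
    intro s
    obtain ⟨h1, h2⟩ := hJ L le_rfl s 0 ⟨le_rfl, zero_le_one⟩
    rw [zero_smul, sub_zero, one_smul, zero_add, hTL1] at h1
    linarith
  have hL1R : (1 : ℝ) ≤ (L : ℝ) := by exact_mod_cast hL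
  have hB0 : (0 : ℝ) ≤ (L : ℝ) + 1 / 2 := by linarith
  have hB2 : (L : ℝ) + 1 / 2 < ‖V‖ ^ 2 := by
    nlinarith [Real.sq_sqrt hB0, Real.sqrt_nonneg ((L : ℝ) + 1 / 2), hV]
  have hB1 : 1 ≤ ‖V‖ := by nlinarith [norm_nonneg V]
  set b : ℝ := ‖V‖ + ‖V - W‖ with hbdef
  have hb1 : 1 ≤ b := by
    have h0 := norm_nonneg (V - W)
    rw [hbdef]; linarith
  have hVb : ‖V‖ ≤ b := le_add_of_nonneg_right (norm_nonneg _)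
  have hWb : ‖W‖ ≤ b := by
    have h1 : W = V - (V - W) := by abel
    calc ‖W‖ = ‖V - (V - W)‖ := by rw [← h1]
      _ ≤ ‖V‖ + ‖V - W‖ := norm_sub_le _ _
  have hloss0 : 0 ≤ loss φ x y V :=
    mul_nonneg (by positivity) (Finset.sum_nonneg fun s _ => Gf_nonneg _)
  have hsp : (1 : ℝ) ≤ Real.sqrt p := by
    rw [show (1 : ℝ) = Real.sqrt 1 from Real.sqrt_one.symm]
    exact Real.sqrt_le_sqrt (by exact_mod_cast hp)
  have hgradV : gradient (loss φ x y) V =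
      (InnerProductSpace.toDual ℝ (Params L p)).symm (fderiv ℝ (loss φ x y) V) := rfl
  have hgradW : gradient (loss φ x y) W =
      (InnerProductSpace.toDual ℝ (Params L p)).symm (fderiv ℝ (loss φ x y) W) := rfl
  rw [hgradV, hgradW, ← map_sub, LinearIsometryEquiv.norm_map]
  rw [(hasFDerivAt_loss φ hd x y V).fderiv, (hasFDerivAt_loss φ hd x y W).fderiv]
  have hC0 : 0 ≤ 256 * ((L : ℝ) + 1) * Real.sqrt p * loss φ x y V * ‖V‖ ^ (3 * L + 5) *
      ‖V - W‖ / h := by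
    have h0 : (0 : ℝ) ≤ 256 * ((L : ℝ) + 1) * Real.sqrt p := by positivity
    exact div_nonneg (mul_nonneg (mul_nonneg (mul_nonneg h0 hloss0) (by positivity))
      (norm_nonneg _)) hh0.le
  refine ContinuousLinearMap.opNorm_le_bound _ hC0 fun u => ?_
  have happly : (((1 / (n : ℝ)) •
        ∑ s, (-(y s) * sig (-(y s * netOut φ V (x s)))) • dnetL φ V (x s)) -
      ((1 / (n : ℝ)) •
        ∑ s, (-(y s) * sig (-(y s * netOut φ W (x s)))) • dnetL φ W (x s))) u =
      (1 / (n : ℝ)) * ∑ s, ((-(y s) * sig (-(y s * netOut φ V (x s)))) * dnetL φ V (x s) u -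
        (-(y s) * sig (-(y s * netOut φ W (x s)))) * dnetL φ W (x s) u) := by
    simp only [ContinuousLinearMap.sub_apply, ContinuousLinearMap.smul_apply,
      ContinuousLinearMap.coe_sum', Finset.sum_apply, smul_eq_mul]
    rw [← mul_sub, ← Finset.sum_sub_distrib]
  rw [happly, Real.norm_eq_abs, abs_mul,
    abs_of_nonneg (show (0 : ℝ) ≤ 1 / (n : ℝ) by positivity)]
  have hstep1 : |∑ s, ((-(y s) * sig (-(y s * netOut φ V (x s)))) * dnetL φ V (x s) u -
        (-(y s) * sig (-(y s * netOut φ W (x s)))) * dnetL φ W (x s) u)| ≤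
      ∑ s, (32 * (L : ℝ) ^ 3 / h * b ^ (2 * L + 3) * lossS φ (x s) (y s) V * ‖u‖ *
        ‖V - W‖) :=
    (Finset.abs_sum_le_sum_abs _ _).trans (Finset.sum_le_sum fun s _ =>
      key_bound hL hφ hh0 hh1 (hx s) (hy s) hb1 hVb hWb (hlossW s) u)
  have hsum_eq : ∑ s, (32 * (L : ℝ) ^ 3 / h * b ^ (2 * L + 3) * lossS φ (x s) (y s) V *
        ‖u‖ * ‖V - W‖) =
      (32 * (L : ℝ) ^ 3 / h * b ^ (2 * L + 3) * ‖u‖ * ‖V - W‖) *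
        ∑ s, lossS φ (x s) (y s) V := by
    rw [Finset.mul_sum]
    exact Finset.sum_congr rfl fun s _ => by ring
  have hnum : 32 * (L : ℝ) ^ 3 * b ^ (2 * L + 3) ≤
      256 * ((L : ℝ) + 1) * Real.sqrt p * ‖V‖ ^ (3 * L + 5) :=
    final_numeric hL hB2 hB1 hclose (norm_nonneg _) hsp
  have hfac : 0 ≤ loss φ x y V * ‖V - W‖ * ‖u‖ * (1 / h) :=
    mul_nonneg (mul_nonneg (mul_nonneg hloss0 (norm_nonneg _)) (norm_nonneg _))
      (by positivity)
  calc (1 / (n : ℝ)) * |∑ s, ((-(y s) * sig (-(y s * netOut φ V (x s)))) * dnetL φ V (x s) u -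
        (-(y s) * sig (-(y s * netOut φ W (x s)))) * dnetL φ W (x s) u)|
      ≤ (1 / (n : ℝ)) * ((32 * (L : ℝ) ^ 3 / h * b ^ (2 * L + 3) * ‖u‖ * ‖V - W‖) *
          ∑ s, lossS φ (x s) (y s) V) :=
        mul_le_mul_of_nonneg_left (hstep1.trans (le_of_eq hsum_eq)) (by positivity)
    _ = (32 * (L : ℝ) ^ 3 / h * b ^ (2 * L + 3) * ‖u‖ * ‖V - W‖) * loss φ x y V := by
        rw [show loss φ x y V = (1 / (n : ℝ)) * ∑ s, lossS φ (x s) (y s) V from rfl]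
        ring
    _ = (32 * (L : ℝ) ^ 3 * b ^ (2 * L + 3)) *
          (loss φ x y V * ‖V - W‖ * ‖u‖ * (1 / h)) := by ring
    _ ≤ (256 * ((L : ℝ) + 1) * Real.sqrt p * ‖V‖ ^ (3 * L + 5)) *
          (loss φ x y V * ‖V - W‖ * ‖u‖ * (1 / h)) :=
        mul_le_mul_of_nonneg_right hnum hfac
    _ = 256 * ((L : ℝ) + 1) * Real.sqrt p * loss φ x y V * ‖V‖ ^ (3 * L + 5) *
          ‖V - W‖ / h * ‖u‖ := by ring
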